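/- Let x, δ, ε be integers satisfying x² − 2δ² = 2 − ε², and let k ∈ ℕ. Set x_k = H(2k)·x + 2·P(2k)·δ and δ_k = P(2k)·x + H(2k)·δ. Then H(2k)² − 2·P(2k)² = 1, x_k² − 2·δ_k² = 2 − ε², and gcd(x_k + δ_k, x_k − δ_k) = gcd(x + δ, x − δ). (This is the arithmetic content of the k-th order Brahmagupta move: it preserves the Pell-type norm equation and the coprimality of the weight parameters c = x + δ, d = x − δ.) -/

import Mathlib

/-- Pell numbers: P 0 = 0, P 1 = 1, P (m+2) = 2·P (m+1) + P m. -/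
def pell : ℕ → ℕ
  | 0 => 0
  | 1 => 1
  | m + 2 => 2 * pell (m + 1) + pell m

/-- Half-companion Pell numbers: H 0 = 1, H 1 = 1, H (m+2) = 2·H (m+1) + H m. -/
def hpell : ℕ → ℕ
  | 0 => 1
  | 1 => 1
  | m + 2 => 2 * hpell (m + 1) + hpell m

lemma pell_hpell_step : ∀ m : ℕ,
    pell (m+1) = pell m + hpell m ∧ hpell (m+1) = hpell m + 2 * pell m := by
  intro m
  induction m with
  | zero => simp [pell, hpell]
  | succ n ih =>
    obtain ⟨h1, h2⟩ := ih
    have e1 : pell (n+1+1) = 2 * pell (n+1) + pell n := rfl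
    have e2 : hpell (n+1+1) = 2 * hpell (n+1) + hpell n := rfl
    constructor <;> omega

lemma pell_norm : ∀ m : ℕ, (hpell m : ℤ) ^ 2 - 2 * (pell m : ℤ) ^ 2 = (-1) ^ m := by
  intro m
  induction m with
  | zero => simp [pell, hpell]
  | succ n ih =>
    obtain ⟨h1, h2⟩ := pell_hpell_step n
    rw [h1, h2]
    push_cast
    rw [pow_succ]
    linear_combination (-1 : ℤ) * ih

lemma pell_even (k : ℕ) : 2 ∣ pell (2 * k) := by
  induction k with
  | zero => simp [pell]
  | succ n ih =>
    have : 2 * (n + 1) = 2 * n + 2 := by ring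
    rw [this]
    have e1 : pell (2*n+2) = 2 * pell (2*n+1) + pell (2*n) := rfl
    omega

lemma gcd_unimodular (a b c d u v : ℤ) (h : a * d - b * c = 1) :
    Int.gcd (a * u + b * v) (c * u + d * v) = Int.gcd u v := by
  apply Nat.dvd_antisymm
  · have hu : (Int.gcd (a*u+b*v) (c*u+d*v) : ℤ) ∣ u := by
      have h' : (Int.gcd (a*u+b*v) (c*u+d*v) : ℤ) ∣ d * (a*u+b*v) - b * (c*u+d*v) :=
        dvd_sub ((Int.gcd_dvd_left ..).mul_left d) ((Int.gcd_dvd_right ..).mul_left b)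
      have e : d * (a*u+b*v) - b * (c*u+d*v) = u := by linear_combination u * h
      rwa [e] at h'
    have hv : (Int.gcd (a*u+b*v) (c*u+d*v) : ℤ) ∣ v := by
      have h' : (Int.gcd (a*u+b*v) (c*u+d*v) : ℤ) ∣ a * (c*u+d*v) - c * (a*u+b*v) :=
        dvd_sub ((Int.gcd_dvd_right ..).mul_left a) ((Int.gcd_dvd_left ..).mul_left c)
      have e : a * (c*u+d*v) - c * (a*u+b*v) = v := by linear_combination v * h
      rwa [e] at h'
    exact Int.natCast_dvd_natCast.mp (Int.dvd_coe_gcd hu hv)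
  · have h1 : (Int.gcd u v : ℤ) ∣ a * u + b * v :=
      dvd_add ((Int.gcd_dvd_left ..).mul_left a)
        ((Int.gcd_dvd_right ..).mul_left b)
    have h2 : (Int.gcd u v : ℤ) ∣ c * u + d * v :=
      dvd_add ((Int.gcd_dvd_left ..).mul_left c)
        ((Int.gcd_dvd_right ..).mul_left d)
    exact Int.natCast_dvd_natCast.mp (Int.dvd_coe_gcd h1 h2)

theorem stmt_19 (x δ ε : ℤ) (h : x ^ 2 - 2 * δ ^ 2 = 2 - ε ^ 2) (k : ℕ) :
    (hpell (2*k) : ℤ) ^ 2 - 2 * (pell (2*k) : ℤ) ^ 2 = 1 ∧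
    ((hpell (2*k) : ℤ) * x + 2 * (pell (2*k) : ℤ) * δ) ^ 2 -
        2 * ((pell (2*k) : ℤ) * x + (hpell (2*k) : ℤ) * δ) ^ 2 = 2 - ε ^ 2 ∧
    Int.gcd (((hpell (2*k) : ℤ) * x + 2 * (pell (2*k) : ℤ) * δ) +
          ((pell (2*k) : ℤ) * x + (hpell (2*k) : ℤ) * δ))
        (((hpell (2*k) : ℤ) * x + 2 * (pell (2*k) : ℤ) * δ) -
          ((pell (2*k) : ℤ) * x + (hpell (2*k) : ℤ) * δ)) =
      Int.gcd (x + δ) (x - δ) := by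
  have hnorm : (hpell (2*k) : ℤ) ^ 2 - 2 * (pell (2*k) : ℤ) ^ 2 = 1 := by
    have := pell_norm (2*k)
    rwa [pow_mul, neg_one_sq, one_pow] at this
  refine ⟨hnorm, by nlinarith [hnorm, h], ?_⟩
  obtain ⟨q, hq⟩ := pell_even k
  set H := (hpell (2*k) : ℤ)
  have hP : (pell (2*k) : ℤ) = 2 * q := by exact_mod_cast hq
  have key := gcd_unimodular (H + 3*q) (-q) q (H - 3*q) (x + δ) (x - δ)
    (by nlinarith [hnorm, hP])
  rw [← key]
  congr 1 <;> rw [hP] <;> ring
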